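/- Two vectors x, y in the complex space ℓ_∞(Γ, ℂ) with ‖x‖ ≤ 1, ‖y‖ ≤ 1 have non-disjoint supports if and only if there exist z ∈ ℓ_∞(Γ, ℂ) and ε = ±1 with ‖z‖ ≤ 1, ‖x + z‖ ≤ 1, ‖εy + z‖ ≤ 1, and ‖x + εy + z‖ > 1. -/

import Mathlib

/-- two vectors `x, y` in `ℓ∞(Γ, ℂ)` of norm at most one have
non-disjoint supports if and only if there exist `z ∈ ℓ∞(Γ, ℂ)` and `ε = ±1` with
`‖z‖ ≤ 1`, `‖x + z‖ ≤ 1`, `‖εy + z‖ ≤ 1` and `‖x + εy + z‖ > 1`. -/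
theorem stmt_15 (Γ : Type*) (x y : lp (fun _ : Γ => ℂ) ⊤)
    (hx : ‖x‖ ≤ 1) (hy : ‖y‖ ≤ 1) :
    (∃ γ : Γ, x γ ≠ 0 ∧ y γ ≠ 0) ↔
      ∃ (z : lp (fun _ : Γ => ℂ) ⊤) (ε : ℝ), (ε = 1 ∨ ε = -1) ∧
        ‖z‖ ≤ 1 ∧ ‖x + z‖ ≤ 1 ∧ ‖ε • y + z‖ ≤ 1 ∧ 1 < ‖x + ε • y + z‖ := by
  classical
  constructor
  · rintro ⟨γ, hxγ, hyγ⟩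
    set a : ℂ := x γ with ha
    set b0 : ℂ := y γ with hb0
    set r : ℝ := (a * (starRingEnd ℂ) b0).re with hr
    set ε : ℝ := if 0 ≤ r then 1 else -1 with hε
    have hε1 : ε = 1 ∨ ε = -1 := by
      by_cases h : 0 ≤ r <;> simp [hε, h]
    have hεabs : |ε| = 1 := by rcases hε1 with h | h <;> simp [h]
    set b : ℂ := (ε : ℂ) * b0 with hb
    have hbne : b ≠ 0 := by
      rcases hε1 with h | h <;> simp [hb, h, hyγ]
    have hre : 0 ≤ (a * (starRingEnd ℂ) b).re := by
      have : (a * (starRingEnd ℂ) b).re = ε * r := by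
        rw [hb, map_mul, Complex.conj_ofReal]
        have e : a * ((ε:ℂ) * (starRingEnd ℂ) b0) = (ε:ℂ) * (a * (starRingEnd ℂ) b0) := by
          ring
        rw [e, Complex.re_ofReal_mul, hr]
      rw [this]
      by_cases h : 0 ≤ r
      · simp only [hε, if_pos h]; linarith
      · simp only [hε, if_neg h]; push_neg at h; nlinarith
    have hna : ‖a‖ ≤ 1 := le_trans (lp.norm_apply_le_norm ENNReal.top_ne_zero x γ) hx
    have hnb0 : ‖b0‖ ≤ 1 := le_trans (lp.norm_apply_le_norm ENNReal.top_ne_zero y γ) hy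
    have hnb : ‖b‖ = ‖b0‖ := by
      rw [hb, norm_mul, Complex.norm_real, Real.norm_eq_abs, hεabs, one_mul]
    have hnb1 : ‖b‖ ≤ 1 := by rw [hnb]; exact hnb0
    set M : ℝ := max ‖a‖ ‖b‖ with hM
    have hM1 : M ≤ 1 := max_le hna hnb1
    have haPos : 0 < ‖a‖ := norm_pos_iff.mpr hxγ
    have hbPos : 0 < ‖b‖ := norm_pos_iff.mpr hbne
    set s : ℂ := a + b with hs
    -- ‖s‖ > M
    have hs2 : M ^ 2 < ‖s‖ ^ 2 := by
      have h1 : ‖s‖ ^ 2 = Complex.normSq s := by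
        rw [Complex.sq_norm]
      have h2 : Complex.normSq s =
          Complex.normSq a + Complex.normSq b + 2 * (a * (starRingEnd ℂ) b).re :=
        Complex.normSq_add a b
      have h3 : Complex.normSq a = ‖a‖ ^ 2 := by rw [Complex.sq_norm]
      have h4 : Complex.normSq b = ‖b‖ ^ 2 := by rw [Complex.sq_norm]
      have h5 : M ^ 2 ≤ max (‖a‖ ^ 2) (‖b‖ ^ 2) := by
        rcases max_cases ‖a‖ ‖b‖ with ⟨h, _⟩ | ⟨h, _⟩ <;> rw [hM, h]
        · exact le_max_left _ _
        · exact le_max_right _ _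
      have h6 : max (‖a‖ ^ 2) (‖b‖ ^ 2) < ‖a‖ ^ 2 + ‖b‖ ^ 2 := by
        rcases max_cases (‖a‖ ^ 2) (‖b‖ ^ 2) with ⟨h, _⟩ | ⟨h, _⟩ <;> rw [h] <;> nlinarith
      rw [h1, h2, h3, h4]; nlinarith
    have hsM : M < ‖s‖ := lt_of_pow_lt_pow_left₀ 2 (norm_nonneg s) hs2
    have hMpos : 0 < M := lt_of_lt_of_le haPos (le_max_left _ _)
    have hsne : (0:ℝ) < ‖s‖ := lt_trans hMpos hsM
    set t : ℝ := 1 - M with ht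
    have ht0 : 0 ≤ t := by linarith
    set c : ℝ := t / ‖s‖ with hc
    have hc0 : 0 ≤ c := div_nonneg ht0 hsne.le
    set w : ℂ := (c : ℝ) • s with hw
    have hnw : ‖w‖ = t := by
      rw [hw, norm_smul, Real.norm_eq_abs, abs_of_nonneg hc0, hc,
        div_mul_cancel₀ _ hsne.ne']
    set z : lp (fun _ : Γ => ℂ) ⊤ := lp.single ⊤ γ w with hz
    refine ⟨z, ε, hε1, ?_, ?_, ?_, ?_⟩
    · -- ‖z‖ ≤ 1
      refine lp.norm_le_of_forall_le zero_le_one fun i => ?_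
      by_cases h : i = γ
      · rw [h, hz, lp.single_apply_self, hnw]; linarith
      · rw [hz, lp.single_apply_ne _ _ _ h]; simp
    · -- ‖x + z‖ ≤ 1
      refine lp.norm_le_of_forall_le zero_le_one fun i => ?_
      rw [lp.coeFn_add, Pi.add_apply]
      by_cases h : i = γ
      · rw [h, hz, lp.single_apply_self]
        calc ‖x γ + w‖ ≤ ‖a‖ + t := by rw [← ha]; exact (norm_add_le _ _).trans (by rw [hnw])
        _ ≤ 1 := by have : ‖a‖ ≤ M := le_max_left _ _; linarith
      · rw [hz, lp.single_apply_ne _ _ _ h, add_zero]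
        exact le_trans (lp.norm_apply_le_norm ENNReal.top_ne_zero x i) hx
    · -- ‖ε • y + z‖ ≤ 1
      refine lp.norm_le_of_forall_le zero_le_one fun i => ?_
      rw [lp.coeFn_add, Pi.add_apply, lp.coeFn_smul, Pi.smul_apply]
      by_cases h : i = γ
      · rw [h, hz, lp.single_apply_self]
        have hεy : ε • y γ = b := by rw [hb, ← hb0, Complex.real_smul]
        rw [hεy]
        calc ‖b + w‖ ≤ ‖b‖ + t := (norm_add_le _ _).trans (by rw [hnw])
        _ ≤ 1 := by have : ‖b‖ ≤ M := le_max_right _ _; linarith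
      · rw [hz, lp.single_apply_ne _ _ _ h, add_zero, norm_smul, Real.norm_eq_abs, hεabs,
          one_mul]
        exact le_trans (lp.norm_apply_le_norm ENNReal.top_ne_zero y i) hy
    · -- 1 < ‖x + ε • y + z‖
      have key : (x + ε • y + z) γ = ((1 + c : ℝ) : ℂ) * s := by
        rw [lp.coeFn_add, Pi.add_apply, lp.coeFn_add, Pi.add_apply, lp.coeFn_smul,
          Pi.smul_apply, hz, lp.single_apply_self]
        have hεy : ε • y γ = b := by rw [hb, ← hb0, Complex.real_smul]
        rw [hεy, hw, ← ha, ← hs, Complex.real_smul]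
        push_cast
        ring
      have h1 : ‖(x + ε • y + z) γ‖ = ‖s‖ + t := by
        rw [key, norm_mul, Complex.norm_real, Real.norm_eq_abs,
          abs_of_nonneg (by linarith : (0:ℝ) ≤ 1 + c), hc, add_mul, one_mul,
          div_mul_cancel₀ _ hsne.ne']
      have h2 : 1 < ‖s‖ + t := by rw [ht]; linarith
      exact lt_of_lt_of_le (h1 ▸ h2) (lp.norm_apply_le_norm ENNReal.top_ne_zero _ γ)
  · rintro ⟨z, ε, hε1, hz, hxz, hyz, hbig⟩
    by_contra h
    push_neg at h
    have : ‖x + ε • y + z‖ ≤ 1 := by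
      refine lp.norm_le_of_forall_le zero_le_one fun i => ?_
      rw [lp.coeFn_add, Pi.add_apply, lp.coeFn_add, Pi.add_apply]
      rcases em (x i = 0) with h0 | h0
      · have e : x i + (ε • y) i + z i = (ε • y + z) i := by
          rw [lp.coeFn_add, Pi.add_apply, h0, zero_add]
        rw [e]
        exact le_trans (lp.norm_apply_le_norm ENNReal.top_ne_zero _ i) hyz
      · have hy0 : y i = 0 := h i h0
        have e : x i + (ε • y) i + z i = (x + z) i := by
          rw [lp.coeFn_add, Pi.add_apply, lp.coeFn_smul, Pi.smul_apply, hy0, smul_zero,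
            add_zero]
        rw [e]
        exact le_trans (lp.norm_apply_le_norm ENNReal.top_ne_zero _ i) hxz
    linarith
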